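/- For the semigroup S generated by {(0,0),(1,0),(0,1),(1,1)} ⊂ ℕ^2, no monomial order on K[S] refines the affine degree: i.e., there is no well-order < on S compatible with addition such that δ^A(s) < δ^A(r) implies s < r, where δ^A(s) is the minimal number of generators needed to write s as a sum of generators. -/

import Mathlib

/-- The generating set `G = {(0,0),(1,0),(0,1),(1,1)} ⊆ ℕ²`. -/
def Gset : Set (ℕ × ℕ) := {(0,0), (1,0), (0,1), (1,1)}

/-- The affine degree: the minimal number `d` of generators of `G`
summing to `s`. -/
noncomputable def deltaA (s : ℕ × ℕ) : ℕ :=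
  sInf {d | ∃ f : Fin d → ℕ × ℕ, (∀ i, f i ∈ Gset) ∧ ∑ i, f i = s}

lemma deltaA_one_one : deltaA (1,1) ≤ 1 := by
  apply Nat.sInf_le
  exact ⟨![(1,1)], by intro i; fin_cases i; simp [Gset], by simp⟩

lemma deltaA_ge_two (s : ℕ × ℕ) (hs0 : s ≠ 0) (hsG : s ∉ Gset)
    (hne : ∃ f : Fin 2 → ℕ × ℕ, (∀ i, f i ∈ Gset) ∧ ∑ i, f i = s) :
    1 < deltaA s := by
  have hmem : ∃ f : Fin (deltaA s) → ℕ × ℕ, (∀ i, f i ∈ Gset) ∧ ∑ i, f i = s :=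
    Nat.sInf_mem (⟨2, hne⟩ : Set.Nonempty
      {d | ∃ f : Fin d → ℕ × ℕ, (∀ i, f i ∈ Gset) ∧ ∑ i, f i = s})
  by_contra h
  push_neg at h
  rcases Nat.le_one_iff_eq_zero_or_eq_one.mp h with h0 | h1
  · rw [h0] at hmem
    obtain ⟨f, -, hsum⟩ := hmem
    simp at hsum
    exact hs0 hsum.symm
  · rw [h1] at hmem
    obtain ⟨f, hf, hsum⟩ := hmem
    rw [Fin.sum_univ_one] at hsum
    exact hsG (hsum ▸ hf 0)

/-- For the semigroup generated by `{(0,0),(1,0),(0,1),(1,1)}`, there is no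
monomial order (translation-invariant well-order with `0` minimal) refining
the affine degree. -/
theorem no_monomial_order_refining_affine_degree :
    ¬ ∃ r : (AddSubmonoid.closure Gset) → (AddSubmonoid.closure Gset) → Prop,
      IsWellOrder (AddSubmonoid.closure Gset) r ∧
      (∀ s : AddSubmonoid.closure Gset, s ≠ 0 → r 0 s) ∧
      (∀ s t u : AddSubmonoid.closure Gset, r s t → r (s + u) (t + u)) ∧
      (∀ s t : AddSubmonoid.closure Gset,
        deltaA (s : ℕ × ℕ) < deltaA (t : ℕ × ℕ) → r s t) := by
  rintro ⟨r, hWO, -, hadd, hdeg⟩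
  haveI := hWO
  have ha : ((1,0) : ℕ × ℕ) ∈ AddSubmonoid.closure Gset :=
    AddSubmonoid.subset_closure (by simp [Gset])
  have hb : ((0,1) : ℕ × ℕ) ∈ AddSubmonoid.closure Gset :=
    AddSubmonoid.subset_closure (by simp [Gset])
  set a : AddSubmonoid.closure Gset := ⟨(1,0), ha⟩ with ha'
  set b : AddSubmonoid.closure Gset := ⟨(0,1), hb⟩ with hb'
  have h20 : 1 < deltaA (2,0) := by
    refine deltaA_ge_two _ (by simp) (by simp [Gset]) ⟨![(1,0),(1,0)], ?_, by simp⟩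
    intro i; fin_cases i <;> simp [Gset]
  have h02 : 1 < deltaA (0,2) := by
    refine deltaA_ge_two _ (by simp) (by simp [Gset]) ⟨![(0,1),(0,1)], ?_, by simp⟩
    intro i; fin_cases i <;> simp [Gset]
  rcases trichotomous_of r a b with h | h | h
  · have h1 : r (a + a) (b + a) := hadd a b a h
    have h2 : r (b + a) (a + a) := by
      apply hdeg
      have e1 : ((b + a : AddSubmonoid.closure Gset) : ℕ × ℕ) = (1,1) := rfl
      have e2 : ((a + a : AddSubmonoid.closure Gset) : ℕ × ℕ) = (2,0) := rfl
      rw [e1, e2]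
      exact lt_of_le_of_lt deltaA_one_one h20
    exact asymm h1 h2
  · exact absurd (congrArg Subtype.val h) (by rw [ha', hb']; simp)
  · have h1 : r (b + b) (a + b) := hadd b a b h
    have h2 : r (a + b) (b + b) := by
      apply hdeg
      have e1 : ((a + b : AddSubmonoid.closure Gset) : ℕ × ℕ) = (1,1) := rfl
      have e2 : ((b + b : AddSubmonoid.closure Gset) : ℕ × ℕ) = (0,2) := rfl
      rw [e1, e2]
      exact lt_of_le_of_lt deltaA_one_one h02
    exact asymm h1 h2
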